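/- For the crystal operators on words: if f_i(w) ≠ ∅, then the content of f_i(w) is obtained from the content of w by decreasing the number of i's by one and increasing the number of (i+1)'s by one. Consequently, the operators s̃_i defined by applying e_i or f_i suitably many times (|m_i − m_{i+1}| times) swap the multiplicities m_i and m_{i+1} of the letters i and i+1, and s̃_i is an involution. -/

import Mathlib

/-- Bracket matching for the crystal operators: scanning `w` left to right and
viewing each letter `i+1` as `(` and each letter `i` as `)`, return the pair
(positions of unmatched `i`'s, positions of unmatched `i+1`'s), each listed in
increasing order of position. -/
def unmatched (i : ℕ) (w : List ℕ) : List ℕ × List ℕ :=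
  ((List.range w.length).zip w).foldl
    (fun acc pj =>
      if pj.2 = i + 1 then (acc.1, acc.2 ++ [pj.1])
      else if pj.2 = i then
        match acc.2 with
        | [] => (acc.1 ++ [pj.1], [])
        | _ => (acc.1, acc.2.dropLast)
      else acc)
    ([], [])

/-- The crystal raising operator `e_i`: change the leftmost unmatched `i+1`
to an `i` (undefined if there is none). -/
def eOp (i : ℕ) (w : List ℕ) : Option (List ℕ) :=
  match (unmatched i w).2 with
  | [] => none
  | p :: _ => some (w.set p i)

/-- The crystal lowering operator `f_i`: change the rightmost unmatched `i`
to an `i+1` (undefined if there is none). -/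
def fOp (i : ℕ) (w : List ℕ) : Option (List ℕ) :=
  match (unmatched i w).1.getLast? with
  | none => none
  | some p => some (w.set p (i + 1))

/-- Iterated application of a partial operator. -/
def iterOpt (g : List ℕ → Option (List ℕ)) : ℕ → List ℕ → Option (List ℕ)
  | 0, w => some w
  | k + 1, w => (g w).bind (iterOpt g k)

/-- The operator `s̃_i`: apply `e_i` (resp. `f_i`) `|m_i − m_{i+1}|` times,
where `m_j` is the multiplicity of the letter `j`. -/
def sOp (i : ℕ) (w : List ℕ) : Option (List ℕ) :=
  if w.count i < w.count (i + 1) then iterOpt (eOp i) (w.count (i + 1) - w.count i) w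
  else if w.count (i + 1) < w.count i then iterOpt (fOp i) (w.count i - w.count (i + 1)) w
  else some w

namespace CrystalAux

/-- The step function of the bracket-matching fold, with explicit position. -/
def stepF (i n : ℕ) (acc : List ℕ × List ℕ) (a : ℕ) : List ℕ × List ℕ :=
  if a = i + 1 then (acc.1, acc.2 ++ [n])
  else if a = i then
    match acc.2 with
    | [] => (acc.1 ++ [n], [])
    | _ => (acc.1, acc.2.dropLast)
  else acc

/-- Tail-recursive run of the bracket matching starting at position `n`. -/
def run (i : ℕ) : ℕ → (List ℕ × List ℕ) → List ℕ → List ℕ × List ℕ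
  | _, acc, [] => acc
  | n, acc, a :: t => run i (n+1) (stepF i n acc a) t

lemma run_nil (i n : ℕ) (acc : List ℕ × List ℕ) : run i n acc [] = acc := rfl

lemma run_cons (i n : ℕ) (acc : List ℕ × List ℕ) (a : ℕ) (t : List ℕ) :
    run i n acc (a :: t) = run i (n+1) (stepF i n acc a) t := rfl

lemma foldl_eq_run (i : ℕ) : ∀ (w : List ℕ) (n : ℕ) (acc : List ℕ × List ℕ),
    ((List.range' n w.length).zip w).foldl (fun acc pj => stepF i pj.1 acc pj.2) acc = run i n acc w := by
  intro w
  induction w with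
  | nil => intro n acc; rfl
  | cons a t ih => intro n acc; rw [List.length_cons, List.range'_succ, List.zip_cons_cons, List.foldl_cons, ih, run_cons]

lemma unmatched_eq_run (i : ℕ) (w : List ℕ) : unmatched i w = run i 0 ([],[]) w := by
  rw [unmatched, List.range_eq_range']; exact foldl_eq_run i w 0 ([],[])

lemma stepF_succ (i n : ℕ) (A B : List ℕ) :
    stepF i n (A, B) (i+1) = (A, B ++ [n]) := by
  simp [stepF]

lemma stepF_i_nil (i n : ℕ) (A : List ℕ) : stepF i n (A, []) i = (A ++ [n], ([] : List ℕ)) := by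
  rw [stepF, if_neg (by omega), if_pos rfl]

lemma stepF_i_cons (i n : ℕ) (A : List ℕ) (b : ℕ) (B : List ℕ) :
    stepF i n (A, b :: B) i = (A, (b :: B).dropLast) := by
  rw [stepF, if_neg (by omega), if_pos rfl]

lemma stepF_other (i n : ℕ) (acc : List ℕ × List ℕ) (a : ℕ) (h1 : a ≠ i + 1) (h2 : a ≠ i) :
    stepF i n acc a = acc := by
  simp [stepF, h1, h2]

lemma run_append (i : ℕ) : ∀ (u v : List ℕ) (n : ℕ) (acc : List ℕ × List ℕ),
    run i n acc (u ++ v) = run i (n + u.length) (run i n acc u) v := by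
  intro u
  induction u with
  | nil => intro v n acc; simp [run_nil]
  | cons a t ih =>
    intro v n acc
    simp only [List.cons_append, run_cons, ih, List.length_cons]
    have : n + 1 + t.length = n + (t.length + 1) := by omega
    rw [this]

/-- Membership in the first component: unmatched `i`'s. -/
lemma mem_run_fst (i : ℕ) : ∀ (v : List ℕ) (n : ℕ) (A B : List ℕ) (p : ℕ),
    p ∈ (run i n (A, B) v).1 → p ∈ A ∨ ∃ u t, v = u ++ i :: t ∧ p = n + u.length := by
  intro v
  induction v with
  | nil => intro n A B p hp; exact Or.inl hp
  | cons a t ih =>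
    intro n A B p hp
    rw [run_cons] at hp
    by_cases ha1 : a = i + 1
    · subst ha1
      rw [stepF_succ] at hp
      rcases ih _ _ _ _ hp with h | ⟨u, s, hs, hp⟩
      · exact Or.inl h
      · exact Or.inr ⟨(i+1) :: u, s, by simp [hs], by simp [hp]; omega⟩
    · by_cases ha2 : a = i
      · subst ha2
        cases B with
        | nil =>
          rw [stepF_i_nil] at hp
          rcases ih _ _ _ _ hp with h | ⟨u, s, hs, hp⟩
          · rcases List.mem_append.1 h with h | h
            · exact Or.inl h
            · simp at h; subst h; exact Or.inr ⟨[], t, rfl, by simp⟩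
          · exact Or.inr ⟨a :: u, s, by simp [hs], by simp [hp]; omega⟩
        | cons b bs =>
          rw [stepF_i_cons] at hp
          rcases ih _ _ _ _ hp with h | ⟨u, s, hs, hp⟩
          · exact Or.inl h
          · exact Or.inr ⟨a :: u, s, by simp [hs], by simp [hp]; omega⟩
      · rw [stepF_other _ _ _ _ ha1 ha2] at hp
        rcases ih _ _ _ _ hp with h | ⟨u, s, hs, hp⟩
        · exact Or.inl h
        · exact Or.inr ⟨a :: u, s, by simp [hs], by simp [hp]; omega⟩

/-- Membership in the second component: unmatched `i+1`'s. -/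
lemma mem_run_snd (i : ℕ) : ∀ (v : List ℕ) (n : ℕ) (A B : List ℕ) (p : ℕ),
    p ∈ (run i n (A, B) v).2 → p ∈ B ∨ ∃ u t, v = u ++ (i+1) :: t ∧ p = n + u.length := by
  intro v
  induction v with
  | nil => intro n A B p hp; exact Or.inl hp
  | cons a t ih =>
    intro n A B p hp
    rw [run_cons] at hp
    by_cases ha1 : a = i + 1
    · subst ha1
      rw [stepF_succ] at hp
      rcases ih _ _ _ _ hp with h | ⟨u, s, hs, hp⟩
      · rcases List.mem_append.1 h with h | h
        · exact Or.inl h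
        · simp at h; subst h; exact Or.inr ⟨[], t, rfl, by simp⟩
      · exact Or.inr ⟨(i+1) :: u, s, by simp [hs], by simp [hp]; omega⟩
    · by_cases ha2 : a = i
      · subst ha2
        cases B with
        | nil =>
          rw [stepF_i_nil] at hp
          rcases ih _ _ _ _ hp with h | ⟨u, s, hs, hp⟩
          · simp at h
          · exact Or.inr ⟨a :: u, s, by simp [hs], by simp [hp]; omega⟩
        | cons b bs =>
          rw [stepF_i_cons] at hp
          rcases ih _ _ _ _ hp with h | ⟨u, s, hs, hp⟩
          · exact Or.inl (List.dropLast_subset _ h)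
          · exact Or.inr ⟨a :: u, s, by simp [hs], by simp [hp]; omega⟩
      · rw [stepF_other _ _ _ _ ha1 ha2] at hp
        rcases ih _ _ _ _ hp with h | ⟨u, s, hs, hp⟩
        · exact Or.inl h
        · exact Or.inr ⟨a :: u, s, by simp [hs], by simp [hp]; omega⟩

/-- The first component only grows, by positions ≥ n. -/
lemma run_fst_structure (i : ℕ) : ∀ (v : List ℕ) (n : ℕ) (A B : List ℕ),
    ∃ T, (run i n (A, B) v).1 = A ++ T ∧ ∀ x ∈ T, n ≤ x := by
  intro v
  induction v with
  | nil => intro n A B; exact ⟨[], by simp [run_nil], by simp⟩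
  | cons a t ih =>
    intro n A B
    rw [run_cons]
    by_cases ha1 : a = i + 1
    · subst ha1
      rw [stepF_succ]
      obtain ⟨T, h1, h2⟩ := ih (n+1) A (B ++ [n])
      exact ⟨T, h1, fun x hx => le_trans (by omega) (h2 x hx)⟩
    · by_cases ha2 : a = i
      · subst ha2
        cases B with
        | nil =>
          rw [stepF_i_nil]
          obtain ⟨T, h1, h2⟩ := ih (n+1) (A ++ [n]) []
          refine ⟨[n] ++ T, by simp [h1], ?_⟩
          intro x hx
          rcases List.mem_append.1 hx with hx | hx
          · simp at hx; omega
          · have := h2 x hx; omega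
        | cons b bs =>
          rw [stepF_i_cons]
          obtain ⟨T, h1, h2⟩ := ih (n+1) A ((b :: bs).dropLast)
          exact ⟨T, h1, fun x hx => le_trans (by omega) (h2 x hx)⟩
      · rw [stepF_other _ _ _ _ ha1 ha2]
        obtain ⟨T, h1, h2⟩ := ih (n+1) A B
        exact ⟨T, h1, fun x hx => le_trans (by omega) (h2 x hx)⟩

/-- The second component is always a prefix of the initial one plus new positions ≥ n. -/
lemma run_snd_structure (i : ℕ) : ∀ (v : List ℕ) (n : ℕ) (A B : List ℕ),
    ∃ k S, (run i n (A, B) v).2 = B.take k ++ S ∧ ∀ x ∈ S, n ≤ x := by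
  intro v
  induction v with
  | nil => intro n A B; exact ⟨B.length, [], by simp [run_nil], by simp⟩
  | cons a t ih =>
    intro n A B
    rw [run_cons]
    by_cases ha1 : a = i + 1
    · subst ha1
      rw [stepF_succ]
      obtain ⟨k, S, h1, h2⟩ := ih (n+1) A (B ++ [n])
      rcases le_or_gt k B.length with hk | hk
      · rw [List.take_append_of_le_length hk] at h1
        exact ⟨k, S, h1, fun x hx => le_trans (by omega) (h2 x hx)⟩
      · rw [List.take_of_length_le (by simp; omega)] at h1
        refine ⟨B.length, [n] ++ S, ?_, ?_⟩
        · rw [h1, List.take_length]; simp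
        · intro x hx
          rcases List.mem_append.1 hx with hx | hx
          · simp at hx; omega
          · have := h2 x hx; omega
    · by_cases ha2 : a = i
      · subst ha2
        cases B with
        | nil =>
          rw [stepF_i_nil]
          obtain ⟨k, S, h1, h2⟩ := ih (n+1) (A ++ [n]) []
          simp only [List.take_nil, List.nil_append] at h1
          exact ⟨0, S, by simpa using h1, fun x hx => le_trans (by omega) (h2 x hx)⟩
        | cons b bs =>
          rw [stepF_i_cons]
          obtain ⟨k, S, h1, h2⟩ := ih (n+1) A ((b :: bs).dropLast)
          refine ⟨k ⊓ ((b :: bs).length - 1), S, ?_,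
            fun x hx => le_trans (by omega) (h2 x hx)⟩
          rw [h1, List.dropLast_eq_take, List.take_take]
      · rw [stepF_other _ _ _ _ ha1 ha2]
        obtain ⟨k, S, h1, h2⟩ := ih (n+1) A B
        exact ⟨k, S, h1, fun x hx => le_trans (by omega) (h2 x hx)⟩

/-- Count invariant. -/
lemma run_count (i : ℕ) : ∀ (v : List ℕ) (n : ℕ) (A B : List ℕ),
    ∃ m, (run i n (A, B) v).1.length + m = A.length + v.count i ∧
      (run i n (A, B) v).2.length + m = B.length + v.count (i+1) := by
  intro v
  induction v with
  | nil => intro n A B; exact ⟨0, by simp [run_nil], by simp [run_nil]⟩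
  | cons a t ih =>
    intro n A B
    rw [run_cons]
    by_cases ha1 : a = i + 1
    · subst ha1
      rw [stepF_succ]
      obtain ⟨m, h1, h2⟩ := ih (n+1) A (B ++ [n])
      refine ⟨m, ?_, ?_⟩
      · rw [List.count_cons_of_ne (by omega)]; exact h1
      · rw [List.count_cons_self]
        simp only [List.length_append, List.length_cons, List.length_nil] at h2
        omega
    · by_cases ha2 : a = i
      · subst ha2
        cases B with
        | nil =>
          rw [stepF_i_nil]
          obtain ⟨m, h1, h2⟩ := ih (n+1) (A ++ [n]) []
          refine ⟨m, ?_, ?_⟩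
          · rw [List.count_cons_self]
            simp only [List.length_append, List.length_cons, List.length_nil] at h1
            omega
          · rw [List.count_cons_of_ne (by omega)]
            simpa using h2
        | cons b bs =>
          rw [stepF_i_cons]
          obtain ⟨m, h1, h2⟩ := ih (n+1) A ((b :: bs).dropLast)
          refine ⟨m + 1, ?_, ?_⟩
          · rw [List.count_cons_self]; omega
          · rw [List.count_cons_of_ne (by omega)]
            simp only [List.length_dropLast, List.length_cons] at h2
            simp only [List.length_cons]
            omega
      · rw [stepF_other _ _ _ _ ha1 ha2]
        obtain ⟨m, h1, h2⟩ := ih (n+1) A B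
        refine ⟨m, ?_, ?_⟩
        · rw [List.count_cons_of_ne ha2]; exact h1
        · rw [List.count_cons_of_ne ha1]; exact h2

/-- Simulation lemma used to invert `f`. -/
lemma run_sim_f (i : ℕ) : ∀ (v : List ℕ) (n : ℕ) (A B A' : List ℕ) (p : ℕ),
    (run i n (A, B) v).1 = A →
    run i n (A', p :: B) v = (A', p :: (run i n (A, B) v).2) := by
  intro v
  induction v with
  | nil => intro n A B A' p _; rfl
  | cons a t ih =>
    intro n A B A' p h
    rw [run_cons] at h ⊢
    rw [run_cons]
    by_cases ha1 : a = i + 1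
    · subst ha1
      simp only [stepF_succ, List.cons_append] at h ⊢
      exact ih (n+1) A (B ++ [n]) A' p h
    · by_cases ha2 : a = i
      · subst ha2
        cases B with
        | nil =>
          exfalso
          rw [stepF_i_nil] at h
          obtain ⟨T, hT, _⟩ := run_fst_structure a t (n+1) (A ++ [n]) []
          rw [hT] at h
          have := congrArg List.length h
          simp at this
        | cons b bs =>
          simp only [stepF_i_cons, List.dropLast_cons₂] at h ⊢
          exact ih (n+1) A ((b :: bs).dropLast) A' p h
      · rw [stepF_other _ _ (A, B) _ ha1 ha2] at h ⊢
        rw [stepF_other _ _ (A', p :: B) _ ha1 ha2]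
        exact ih (n+1) A B A' p h

/-- Simulation lemma used to invert `e`. -/
lemma run_sim_e (i : ℕ) : ∀ (v : List ℕ) (n : ℕ) (A B : List ℕ) (q : ℕ), q < n →
    (run i n (A, q :: B) v).2.head? = some q →
    run i n (A ++ [q], B) v = (A ++ [q], (run i n (A, q :: B) v).2.tail) := by
  intro v
  induction v with
  | nil => intro n A B q _ _; rfl
  | cons a t ih =>
    intro n A B q hq h
    rw [run_cons] at h ⊢
    rw [run_cons]
    by_cases ha1 : a = i + 1
    · subst ha1
      simp only [stepF_succ, List.cons_append] at h ⊢
      exact ih (n+1) A (B ++ [n]) q (by omega) h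
    · by_cases ha2 : a = i
      · subst ha2
        cases B with
        | nil =>
          exfalso
          rw [stepF_i_cons] at h
          simp only [List.dropLast_singleton] at h
          obtain ⟨k, S, hS, hS2⟩ := run_snd_structure a t (n+1) A []
          rw [hS] at h
          simp only [List.take_nil, List.nil_append] at h
          cases S with
          | nil => simp at h
          | cons s ss =>
            simp only [List.head?_cons, Option.some.injEq] at h
            have := hS2 s (by simp)
            omega
        | cons b bs =>
          simp only [stepF_i_cons, List.dropLast_cons₂] at h ⊢
          exact ih (n+1) A ((b :: bs).dropLast) q (by omega) h
      · rw [stepF_other _ _ (A, q :: B) _ ha1 ha2] at h ⊢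
        rw [stepF_other _ _ (A ++ [q], B) _ ha1 ha2]
        exact ih (n+1) A B q (by omega) h

lemma set_append (u : List ℕ) (x y : ℕ) (v : List ℕ) :
    (u ++ y :: v).set u.length x = u ++ x :: v := by
  induction u with
  | nil => rfl
  | cons a t ih => simp [List.set, ih]

lemma getLast?_mem {l : List ℕ} {a : ℕ} (h : l.getLast? = some a) : a ∈ l := by
  rw [List.getLast?_eq_some_iff] at h; obtain ⟨ys, rfl⟩ := h; simp

/-- Full description of `f`: it flips the letter at a position where `w` has an `i`,
and `e` undoes it. -/
lemma fOp_spec (i : ℕ) (w w' : List ℕ) (h : fOp i w = some w') :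
    (∃ u v, w = u ++ i :: v ∧ w' = u ++ (i+1) :: v) ∧ eOp i w' = some w ∧
      (unmatched i w').1.length + 1 = (unmatched i w).1.length := by
  unfold fOp at h
  cases hg : (unmatched i w).1.getLast? with
  | none => rw [hg] at h; exact absurd h (by simp)
  | some p =>
    rw [hg] at h
    simp only [Option.some.injEq] at h
    have hmem : p ∈ (unmatched i w).1 := getLast?_mem hg
    rw [unmatched_eq_run] at hmem hg
    rcases mem_run_fst i w 0 [] [] p hmem with h0 | ⟨u, v, hw, hp⟩
    · simp at h0
    · subst hw
      have hp' : p = u.length := by omega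
      subst hp'
      obtain ⟨AC, hAC⟩ : ∃ AC, run i 0 ([],[]) u = AC := ⟨_, rfl⟩
      obtain ⟨A, C⟩ := AC
      have hdec : ∀ z : List ℕ, run i 0 ([],[]) (u ++ z) = run i u.length (A, C) z := by
        intro z; rw [run_append, hAC, Nat.zero_add]
      have hA : ∀ x ∈ A, x < u.length := by
        intro x hx
        rcases mem_run_fst i u 0 [] [] x (by rw [hAC]; exact hx) with h0 | ⟨u1, t1, hu, hx'⟩
        · simp at h0
        · rw [hu]; simp; omega
      have hC : C = [] := by
        cases hCc : C with
        | nil => rfl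
        | cons c cs =>
          exfalso
          subst hCc
          have hrw : run i 0 ([],[]) (u ++ i :: v)
              = run i (u.length + 1) (A, (c :: cs).dropLast) v := by
            rw [hdec, run_cons, stepF_i_cons]
          rw [hrw] at hmem
          rcases mem_run_fst i v (u.length+1) A _ _ hmem with h0 | ⟨u1, t1, _, hx⟩
          · exact absurd (hA _ h0) (by omega)
          · omega
      subst hC
      have hrw : run i 0 ([],[]) (u ++ i :: v)
          = run i (u.length + 1) (A ++ [u.length], []) v := by
        rw [hdec, run_cons, stepF_i_nil]
      obtain ⟨T, hT1, hT2⟩ := run_fst_structure i v (u.length+1) (A ++ [u.length]) []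
      have hU1 : (run i (u.length+1) (A ++ [u.length], []) v).1 = A ++ [u.length] := by
        rw [hrw] at hg
        cases hTc : T with
        | nil => rw [hT1, hTc]; simp
        | cons t0 ts =>
          exfalso
          subst hTc
          rw [hT1, List.getLast?_append] at hg
          cases hz : (t0 :: ts).getLast? with
          | none => rw [List.getLast?_eq_none_iff] at hz; simp at hz
          | some z =>
            rw [hz] at hg
            simp only [Option.some_or, Option.some.injEq] at hg
            have hz2 := hT2 z (getLast?_mem hz)
            omega
      have hsim := run_sim_f i v (u.length+1) (A ++ [u.length]) [] A u.length hU1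
      have hw' : w' = u ++ (i+1) :: v := by rw [← h, set_append]
      have hrun' : run i 0 ([],[]) (u ++ (i+1) :: v)
          = (A, u.length :: (run i (u.length+1) (A ++ [u.length], []) v).2) := by
        rw [hdec, run_cons, stepF_succ]
        simpa using hsim
      refine ⟨⟨u, v, rfl, hw'⟩, ?_, ?_⟩
      · rw [hw']
        unfold eOp
        rw [unmatched_eq_run, hrun']
        show some ((u ++ (i+1) :: v).set u.length i) = some (u ++ i :: v)
        rw [set_append]
      · have e1 : (unmatched i (u ++ (i+1) :: v)).1 = A := by
          rw [unmatched_eq_run, hrun']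
        have e2 : (unmatched i (u ++ i :: v)).1 = A ++ [u.length] := by
          rw [unmatched_eq_run, hrw, hU1]
        rw [hw', e1, e2]
        simp

/-- Full description of `e`: it flips the letter at a position where `w` has an `i+1`,
and `f` undoes it. -/
lemma eOp_spec (i : ℕ) (w w' : List ℕ) (h : eOp i w = some w') :
    (∃ u v, w = u ++ (i+1) :: v ∧ w' = u ++ i :: v) ∧ fOp i w' = some w ∧
      (unmatched i w').2.length + 1 = (unmatched i w).2.length := by
  unfold eOp at h
  cases hg : (unmatched i w).2 with
  | nil => rw [hg] at h; exact absurd h (by simp)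
  | cons q rest =>
    rw [hg] at h
    simp only [Option.some.injEq] at h
    have hmem : q ∈ (unmatched i w).2 := by rw [hg]; simp
    rw [unmatched_eq_run] at hmem hg
    rcases mem_run_snd i w 0 [] [] q hmem with h0 | ⟨u, v, hw, hq⟩
    · simp at h0
    · subst hw
      have hq' : q = u.length := by omega
      subst hq'
      obtain ⟨AC, hAC⟩ : ∃ AC, run i 0 ([],[]) u = AC := ⟨_, rfl⟩
      obtain ⟨A, C⟩ := AC
      have hdec : ∀ z : List ℕ, run i 0 ([],[]) (u ++ z) = run i u.length (A, C) z := by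
        intro z; rw [run_append, hAC, Nat.zero_add]
      have hA2 : ∀ x ∈ C, x < u.length := by
        intro x hx
        rcases mem_run_snd i u 0 [] [] x (by rw [hAC]; exact hx) with h0 | ⟨u1, t1, hu, hx'⟩
        · simp at h0
        · rw [hu]; simp; omega
      have hC : C = [] := by
        cases hCc : C with
        | nil => rfl
        | cons c cs =>
          exfalso
          subst hCc
          have hrw : run i 0 ([],[]) (u ++ (i+1) :: v)
              = run i (u.length + 1) (A, (c :: cs) ++ [u.length]) v := by
            rw [hdec, run_cons, stepF_succ]
          rw [hrw] at hg
          obtain ⟨k, S, hS, hS2⟩ := run_snd_structure i v (u.length+1) A ((c :: cs) ++ [u.length])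
          rw [hS] at hg
          cases hk : k with
          | zero =>
            rw [hk] at hg
            simp only [List.take_zero, List.nil_append] at hg
            have hm : u.length ∈ S := by rw [hg]; simp
            have := hS2 _ hm; omega
          | succ k' =>
            rw [hk] at hg
            simp only [List.cons_append, List.take_succ_cons] at hg
            have hc : c = u.length := by
              have := congrArg List.head? hg
              simpa using this
            have := hA2 c (by simp)
            omega
      subst hC
      have hrw : run i 0 ([],[]) (u ++ (i+1) :: v)
          = run i (u.length + 1) (A, [u.length]) v := by
        rw [hdec, run_cons, stepF_succ, List.nil_append]
      have hgr : (run i (u.length+1) (A, [u.length]) v).2.head? = some u.length := by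
        rw [← hrw, hg]; rfl
      have hsim := run_sim_e i v (u.length+1) A [] u.length (by omega) hgr
      have hw' : w' = u ++ i :: v := by rw [← h, set_append]
      have hrun' : run i 0 ([],[]) (u ++ i :: v)
          = (A ++ [u.length], (run i (u.length+1) (A, [u.length]) v).2.tail) := by
        rw [hdec, run_cons, stepF_i_nil]
        exact hsim
      have hsnd : (run i (u.length+1) (A, [u.length]) v).2 = u.length :: rest := by
        rw [← hrw]; exact hg
      refine ⟨⟨u, v, rfl, hw'⟩, ?_, ?_⟩
      · rw [hw']
        unfold fOp
        rw [unmatched_eq_run, hrun']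
        simp only [List.getLast?_concat]
        show some ((u ++ i :: v).set u.length (i+1)) = some (u ++ (i+1) :: v)
        rw [set_append]
      · have e1 : (unmatched i (u ++ i :: v)).2
            = (run i (u.length+1) (A, [u.length]) v).2.tail := by
          rw [unmatched_eq_run, hrun']
        rw [hw', e1, hsnd]
        simp

lemma unmatched_count (i : ℕ) (w : List ℕ) :
    ∃ m, (unmatched i w).1.length + m = w.count i ∧
      (unmatched i w).2.length + m = w.count (i+1) := by
  obtain ⟨m, h1, h2⟩ := run_count i w 0 [] []
  rw [← unmatched_eq_run] at h1 h2
  exact ⟨m, by simpa using h1, by simpa using h2⟩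

lemma fOp_isSome (i : ℕ) (w : List ℕ) (hne : (unmatched i w).1 ≠ []) :
    ∃ w', fOp i w = some w' := by
  unfold fOp
  cases hgl : (unmatched i w).1.getLast? with
  | none => exact absurd (List.getLast?_eq_none_iff.mp hgl) hne
  | some p => exact ⟨_, rfl⟩

lemma eOp_isSome (i : ℕ) (w : List ℕ) (hne : (unmatched i w).2 ≠ []) :
    ∃ w', eOp i w = some w' := by
  unfold eOp
  cases hgl : (unmatched i w).2 with
  | nil => exact absurd hgl hne
  | cons p rest => exact ⟨_, rfl⟩

lemma iterOpt_zero (g : List ℕ → Option (List ℕ)) (w : List ℕ) : iterOpt g 0 w = some w := rfl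

lemma iterOpt_succ (g : List ℕ → Option (List ℕ)) (k : ℕ) (w : List ℕ) :
    iterOpt g (k+1) w = (g w).bind (iterOpt g k) := rfl

lemma iterOpt_succ_last (g : List ℕ → Option (List ℕ)) (k : ℕ) :
    ∀ w x y, iterOpt g k w = some x → g x = some y → iterOpt g (k+1) w = some y := by
  induction k with
  | zero =>
    intro w x y h1 h2
    rw [iterOpt_zero] at h1
    simp only [Option.some.injEq] at h1
    subst h1
    rw [iterOpt_succ, h2]
    rfl
  | succ k ih =>
    intro w x y h1 h2
    rw [iterOpt_succ] at h1
    cases hw : g w with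
    | none => rw [hw] at h1; simp at h1
    | some z =>
      rw [hw] at h1
      simp only [Option.bind_some] at h1
      have := ih z x y h1 h2
      rw [iterOpt_succ, hw]
      simpa using this

lemma count_mid (j x : ℕ) (u v : List ℕ) :
    (u ++ x :: v).count j = u.count j + v.count j + if x = j then 1 else 0 := by
  simp only [List.count_append, List.count_cons, beq_iff_eq, Nat.add_assoc]

lemma count_swap₁ (i : ℕ) (u v : List ℕ) :
    (u ++ (i+1) :: v).count i + 1 = (u ++ i :: v).count i := by
  rw [count_mid, count_mid]
  split_ifs <;> omega

lemma count_swap₂ (i : ℕ) (u v : List ℕ) :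
    (u ++ (i+1) :: v).count (i+1) = (u ++ i :: v).count (i+1) + 1 := by
  rw [count_mid, count_mid]
  split_ifs <;> omega

lemma count_swap₃ (i j : ℕ) (u v : List ℕ) (h1 : j ≠ i) (h2 : j ≠ i + 1) :
    (u ++ (i+1) :: v).count j = (u ++ i :: v).count j := by
  rw [count_mid, count_mid]
  split_ifs <;> omega

lemma f_iter (i : ℕ) : ∀ (k : ℕ) (w : List ℕ), k ≤ (unmatched i w).1.length →
    ∃ w', iterOpt (fOp i) k w = some w' ∧
      w'.count i + k = w.count i ∧
      w'.count (i+1) = w.count (i+1) + k ∧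
      (∀ j, j ≠ i → j ≠ i + 1 → w'.count j = w.count j) ∧
      iterOpt (eOp i) k w' = some w := by
  intro k
  induction k with
  | zero => intro w _; exact ⟨w, rfl, by omega, by omega, fun _ _ _ => rfl, rfl⟩
  | succ k ih =>
    intro w hk
    obtain ⟨w1, hf⟩ := fOp_isSome i w (by
      intro h0
      rw [h0] at hk
      simp at hk)
    obtain ⟨⟨u, v, hw, hw1⟩, he, hlen⟩ := fOp_spec i w w1 hf
    subst hw; subst hw1
    have hs1 := count_swap₁ i u v
    have hs2 := count_swap₂ i u v
    obtain ⟨w', hit, h1, h2, h3, hit'⟩ := ih (u ++ (i+1) :: v) (by omega)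
    refine ⟨w', ?_, by omega, by omega, ?_, ?_⟩
    · rw [iterOpt_succ, hf]
      simpa using hit
    · intro j hj1 hj2
      rw [h3 j hj1 hj2, count_swap₃ i j u v hj1 hj2]
    · exact iterOpt_succ_last (eOp i) k w' _ _ hit' he

lemma e_iter (i : ℕ) : ∀ (k : ℕ) (w : List ℕ), k ≤ (unmatched i w).2.length →
    ∃ w', iterOpt (eOp i) k w = some w' ∧
      w'.count i = w.count i + k ∧
      w'.count (i+1) + k = w.count (i+1) ∧
      (∀ j, j ≠ i → j ≠ i + 1 → w'.count j = w.count j) ∧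
      iterOpt (fOp i) k w' = some w := by
  intro k
  induction k with
  | zero => intro w _; exact ⟨w, rfl, by omega, by omega, fun _ _ _ => rfl, rfl⟩
  | succ k ih =>
    intro w hk
    obtain ⟨w1, hf⟩ := eOp_isSome i w (by
      intro h0
      rw [h0] at hk
      simp at hk)
    obtain ⟨⟨u, v, hw, hw1⟩, he, hlen⟩ := eOp_spec i w w1 hf
    subst hw; subst hw1
    have hs1 := count_swap₁ i u v
    have hs2 := count_swap₂ i u v
    obtain ⟨w', hit, h1, h2, h3, hit'⟩ := ih (u ++ i :: v) (by omega)
    refine ⟨w', ?_, by omega, by omega, ?_, ?_⟩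
    · rw [iterOpt_succ, hf]
      simpa using hit
    · intro j hj1 hj2
      rw [h3 j hj1 hj2, ← count_swap₃ i j u v hj1 hj2]
    · exact iterOpt_succ_last (fOp i) k w' _ _ hit' he

end CrystalAux

open CrystalAux in
/-- Content change under the crystal operators, and the involution `s̃_i`:
if `f_i(w) = w'` then `w'` has one fewer `i`, one more `i+1` and otherwise the
same content as `w`; consequently `s̃_i` is everywhere defined, swaps the
multiplicities of `i` and `i+1` leaving all other multiplicities unchanged,
and is an involution. -/
theorem stmt19 (i : ℕ) :
    (∀ w w' : List ℕ, fOp i w = some w' →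
      w'.count i + 1 = w.count i ∧
      w'.count (i + 1) = w.count (i + 1) + 1 ∧
      ∀ j : ℕ, j ≠ i → j ≠ i + 1 → w'.count j = w.count j) ∧
    (∀ w : List ℕ, ∃ w' : List ℕ,
      sOp i w = some w' ∧
      w'.count i = w.count (i + 1) ∧
      w'.count (i + 1) = w.count i ∧
      (∀ j : ℕ, j ≠ i → j ≠ i + 1 → w'.count j = w.count j) ∧
      sOp i w' = some w) := by
  constructor
  · intro w w' h
    obtain ⟨⟨u, v, hw, hw'⟩, -, -⟩ := fOp_spec i w w' h
    subst hw; subst hw'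
    exact ⟨count_swap₁ i u v, count_swap₂ i u v, fun j h1 h2 => count_swap₃ i j u v h1 h2⟩
  · intro w
    rcases lt_trichotomy (w.count i) (w.count (i+1)) with hlt | heq | hgt
    · obtain ⟨m, hm1, hm2⟩ := unmatched_count i w
      obtain ⟨w', h1, hc1, hc2, hc3, h2⟩ := e_iter i (w.count (i+1) - w.count i) w (by omega)
      refine ⟨w', ?_, by omega, by omega, hc3, ?_⟩
      · rw [sOp, if_pos hlt]; exact h1
      · rw [sOp, if_neg (by omega), if_pos (by omega)]
        have hkk : w'.count i - w'.count (i+1) = w.count (i+1) - w.count i := by omega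
        rw [hkk]
        exact h2
    · refine ⟨w, ?_, heq.symm ▸ rfl, ?_, fun _ _ _ => rfl, ?_⟩
      · rw [sOp, if_neg (by omega), if_neg (by omega)]
      · omega
      · rw [sOp, if_neg (by omega), if_neg (by omega)]
    · obtain ⟨m, hm1, hm2⟩ := unmatched_count i w
      obtain ⟨w', h1, hc1, hc2, hc3, h2⟩ := f_iter i (w.count i - w.count (i+1)) w (by omega)
      refine ⟨w', ?_, by omega, by omega, hc3, ?_⟩
      · rw [sOp, if_neg (by omega), if_pos hgt]; exact h1
      · rw [sOp, if_pos (by omega)]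
        have hkk : w'.count (i+1) - w'.count i = w.count i - w.count (i+1) := by omega
        rw [hkk]
        exact h2
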